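/- Let C > 0 be fixed. Then, as ℓ → ∞, ∫_{C/ℓ}^{π/2} (16/(ℓ⁴(ℓ+1)⁴)) P_ℓ'(cos θ)⁴ sin θ dθ = O(1/ℓ²); that is, there exist K > 0 and ℓ₀ ∈ ℕ such that for all integers ℓ ≥ ℓ₀ the absolute value of this integral is at most K/ℓ². -/

import Mathlib

open Real intervalIntegral

/-- The `n`-th Legendre polynomial via Rodrigues' formula:
`P_n(t) = (1/(2^n n!)) dⁿ/dtⁿ (t² − 1)ⁿ`. -/
noncomputable def legendreP (n : ℕ) (t : ℝ) : ℝ :=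
  (1 / ((2 : ℝ) ^ n * (n.factorial : ℝ))) *
    iteratedDeriv n (fun s : ℝ => (s ^ 2 - 1) ^ n) t

namespace LegAux
open Polynomial Finset

noncomputable def Q (n k : ℕ) : Polynomial ℝ := derivative^[k] ((X ^ 2 - 1) ^ n)

lemma Q_succ (n k : ℕ) : Q n (k + 1) = derivative (Q n k) := by
  simp [Q, Function.iterate_succ_apply']

lemma contQ (n k : ℕ) : Continuous fun x : ℝ => (Q n k).eval x :=
  (Q n k).continuous

lemma hasDerivAtQ (n k : ℕ) (x : ℝ) :
    HasDerivAt (fun x : ℝ => (Q n k).eval x) ((Q n (k + 1)).eval x) x := by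
  rw [Q_succ]; exact (Q n k).hasDerivAt x

lemma iteratedDeriv_polyeval (p : Polynomial ℝ) (k : ℕ) :
    iteratedDeriv k (fun x : ℝ => p.eval x) = fun x => (derivative^[k] p).eval x := by
  induction k with
  | zero => simp
  | succ k ih =>
    rw [iteratedDeriv_succ, ih]
    funext x
    rw [Function.iterate_succ_apply']
    exact Polynomial.deriv _

lemma legendreP_eq (n : ℕ) :
    legendreP n = fun t => (1 / ((2 : ℝ) ^ n * (n.factorial : ℝ))) * (Q n n).eval t := by
  funext t
  have h : (fun s : ℝ => (s ^ 2 - 1) ^ n) = fun s : ℝ => (((X : Polynomial ℝ) ^ 2 - 1) ^ n).eval s := by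
    funext s; simp
  rw [legendreP, h, iteratedDeriv_polyeval]
  rfl

lemma deriv_legendreP (n : ℕ) :
    deriv (legendreP n) = fun t => (1 / ((2 : ℝ) ^ n * (n.factorial : ℝ))) * (Q n (n + 1)).eval t := by
  funext t
  rw [legendreP_eq]
  rw [deriv_const_mul _ ((Q n n).differentiable.differentiableAt)]
  rw [(Polynomial.deriv _ : deriv (fun x : ℝ => (Q n n).eval x) t = _)]
  rw [← Q_succ]

lemma eval_vanish (n j : ℕ) (hj : j < n) (x : ℝ) (hx : x ^ 2 - 1 = 0) :
    (Q n j).eval x = 0 := by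
  obtain ⟨q, hq⟩ := pow_sub_dvd_iterate_derivative_pow ((X : Polynomial ℝ) ^ 2 - 1) n j
  rw [Q, hq, eval_mul, eval_pow]
  have : ((X : Polynomial ℝ) ^ 2 - 1).eval x = 0 := by simpa using hx
  rw [this, zero_pow (by omega), zero_mul]

lemma deriv_zero_of_eq_zero {f D : ℝ → ℝ} (hf : ∀ x, HasDerivAt f (D x) x)
    (h0 : ∀ x, f x = 0) : ∀ x, D x = 0 := by
  intro x
  have h1 : f = fun _ => (0 : ℝ) := funext h0
  rw [h1] at hf
  exact (hf x).unique (hasDerivAt_const x 0)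

lemma rel0_ev (n : ℕ) (x : ℝ) :
    (x ^ 2 - 1) * (Q n 1).eval x - 2 * n * (x * (Q n 0).eval x) = 0 := by
  have h1 : (Q n 1) = C (n:ℝ) * ((X^2-1)^(n-1)) * (C 2 * X) := by
    simp only [Q, Function.iterate_one, derivative_pow]
    congr 1
    simp only [derivative_sub, derivative_one, derivative_pow, derivative_X, mul_one, sub_zero]
    nth_rewrite 1 [show (2:ℕ) = 1 + 1 by rfl]
    simp [pow_one]
  have h0 : (Q n 0) = (X^2-1)^n := by simp [Q]
  rw [h0, h1]
  cases n with
  | zero => simp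
  | succ m =>
    simp only [eval_mul, eval_C, eval_pow, eval_sub, eval_X, eval_one, eval_ofNat,
      Nat.add_sub_cancel]
    push_cast
    rw [pow_succ]
    ring

lemma rel_ev (n m : ℕ) (x : ℝ) :
    (x ^ 2 - 1) * (Q n (m+2)).eval x
      + (2 * ((m:ℝ) + 1) - 2 * n) * (x * (Q n (m+1)).eval x)
      + (((m:ℝ) + 1) * ((m:ℝ) - 2 * n)) * (Q n m).eval x = 0 := by
  induction m generalizing x with
  | zero =>
    have hD : ∀ y : ℝ, HasDerivAt
        (fun x : ℝ => (x ^ 2 - 1) * (Q n 1).eval x - 2 * n * (x * (Q n 0).eval x))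
        ((2*y) * (Q n 1).eval y + (y^2-1) * (Q n 2).eval y
          - 2*n*((Q n 0).eval y + y * (Q n 1).eval y)) y := by
      intro y
      exact (((hasDerivAt_pow 2 y).sub_const 1).mul (hasDerivAtQ n 1 y)).sub
        (((hasDerivAt_id y).mul (hasDerivAtQ n 0 y)).const_mul (2*(n:ℝ))) |>.congr_deriv (by
          simp only [Q_succ, id_eq]
          push_cast
          ring)
    have h := deriv_zero_of_eq_zero hD (rel0_ev n) x
    push_cast
    nlinarith [h]
  | succ m ih =>
    have hD : ∀ y : ℝ, HasDerivAt
        (fun x : ℝ => (x ^ 2 - 1) * (Q n (m+2)).eval x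
          + (2 * ((m:ℝ) + 1) - 2 * n) * (x * (Q n (m+1)).eval x)
          + (((m:ℝ) + 1) * ((m:ℝ) - 2 * n)) * (Q n m).eval x)
        ((2*y) * (Q n (m+2)).eval y + (y^2-1) * (Q n (m+3)).eval y
          + (2 * ((m:ℝ) + 1) - 2 * n) * ((Q n (m+1)).eval y + y * (Q n (m+2)).eval y)
          + (((m:ℝ) + 1) * ((m:ℝ) - 2 * n)) * (Q n (m+1)).eval y) y := by
      intro y
      exact ((((hasDerivAt_pow 2 y).sub_const 1).mul (hasDerivAtQ n (m+2) y)).add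
        (((hasDerivAt_id y).mul (hasDerivAtQ n (m+1) y)).const_mul _)).add
        ((hasDerivAtQ n m y).const_mul _) |>.congr_deriv (by simp only [id_eq]; push_cast; ring)
    have h := deriv_zero_of_eq_zero hD ih x
    push_cast
    push_cast at h
    nlinarith [h]

lemma factored (n : ℕ) :
    ((X : Polynomial ℝ) ^ 2 - 1) ^ n = (X - C 1) ^ n * (X + C 1) ^ n := by
  rw [← mul_pow]; congr 1; rw [C_1]; ring

lemma evalQ_one (n : ℕ) : (Q n n).eval 1 = 2 ^ n * n.factorial := by
  rw [Q, factored, iterate_derivative_mul, eval_finset_sum]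
  rw [Finset.sum_eq_single_of_mem 0 (mem_range.mpr n.succ_pos)]
  · rw [Nat.choose_zero_right, one_smul, Nat.sub_zero, eval_mul,
      Function.iterate_zero, id_eq, iterate_derivative_X_sub_pow_self]
    simp [Nat.descFactorial_self]
    ring
  · intro k hk hk0
    have hk' : k ≤ n := Nat.lt_succ_iff.mp (mem_range.mp hk)
    rw [iterate_derivative_X_sub_pow]
    simp only [eval_smul, eval_mul, eval_pow, eval_sub, eval_X, eval_one, eval_C,
      sub_self, smul_eq_mul]
    rw [zero_pow (by omega : n - (n - k) ≠ 0)]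
    simp

lemma evalQ_negone (n : ℕ) : (Q n n).eval (-1) = (-2) ^ n * n.factorial := by
  rw [Q, factored, iterate_derivative_mul, eval_finset_sum]
  rw [Finset.sum_eq_single_of_mem n (mem_range.mpr (Nat.lt_succ_self n))]
  · rw [Nat.choose_self, one_smul, Nat.sub_self, eval_mul,
      Function.iterate_zero, id_eq]
    have h2 : derivative^[n] (((X : Polynomial ℝ) + C 1) ^ n) = (n.factorial : ℕ) • 1 := by
      have := iterate_derivative_X_add_pow (R := ℝ) n n 1
      rw [this, Nat.sub_self, pow_zero, Nat.descFactorial_self]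
    rw [h2]
    simp only [eval_mul, eval_pow, eval_sub, eval_X, eval_C, eval_smul, smul_eq_mul,
      Polynomial.eval_one, mul_one]
    norm_num
  · intro k hk hk0
    rw [iterate_derivative_X_add_pow]
    simp only [eval_smul, eval_mul, eval_pow, eval_add, eval_X, eval_C, smul_eq_mul]
    have : (-1 : ℝ) + 1 = 0 := by ring
    rw [this, zero_pow (by
      have hk' : k ≤ n := Nat.lt_succ_iff.mp (mem_range.mp hk)
      omega : n - k ≠ 0)]
    simp

lemma evalQ1_one (n : ℕ) :
    (Q n (n+1)).eval 1 = ((n:ℝ) * (n+1) / 2) * (2 ^ n * n.factorial) := by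
  have h := rel_ev n n 1
  rw [evalQ_one] at h
  norm_num at h
  nlinarith [h]

lemma evalQ1_negone (n : ℕ) :
    (Q n (n+1)).eval (-1) = -(((n:ℝ) * (n+1) / 2)) * ((-2) ^ n * n.factorial) := by
  have h := rel_ev n n (-1)
  rw [evalQ_negone] at h
  norm_num at h
  nlinarith [h]

-- energy function derivative
lemma energy_hasDeriv (n : ℕ) (y : ℝ) :
    HasDerivAt (fun x : ℝ => ((n:ℝ)*(n+1) - 2) * ((Q n (n+1)).eval x)^2
        + (1 - x^2) * ((Q n (n+2)).eval x)^2)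
      (6 * y * ((Q n (n+2)).eval y)^2) y := by
  have h := rel_ev n (n+1) y
  have e1 : n+1+1 = n+2 := rfl
  have e2 : n+1+2 = n+3 := rfl
  rw [e1, e2] at h
  refine ((((hasDerivAtQ n (n+1) y).pow 2).const_mul ((n:ℝ)*(n+1) - 2)).add
    (((hasDerivAt_pow 2 y).const_sub 1).mul ((hasDerivAtQ n (n+2) y).pow 2))).congr_deriv ?_
  have e3 : n+2+1 = n+3 := rfl
  rw [e3]
  simp only [Pi.pow_apply, e1]
  push_cast at h ⊢
  linear_combination (-2 * (Q n (n+2)).eval y) * h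

lemma sup_bound (n : ℕ) (hn : 2 ≤ n) {x : ℝ} (hx : x ∈ Set.Icc (-1:ℝ) 1) :
    ((Q n (n+1)).eval x)^2 ≤ ((n:ℝ)*(n+1)/2 * (2 ^ n * n.factorial))^2 := by
  set lam : ℝ := (n:ℝ)*(n+1) with hlam
  have hlam2 : 2 < lam := by
    have : (2:ℝ) ≤ n := by exact_mod_cast hn
    nlinarith
  set G : ℝ → ℝ := fun x => (lam - 2) * ((Q n (n+1)).eval x)^2
      + (1 - x^2) * ((Q n (n+2)).eval x)^2 with hG
  have hDeriv : ∀ y : ℝ, HasDerivAt G (6 * y * ((Q n (n+2)).eval y)^2) y :=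
    energy_hasDeriv n
  have hcont : Continuous G := by
    fun_prop
  have hGval : ∀ y : ℝ, y^2 - 1 = 0 → G y = (lam - 2) * ((Q n (n+1)).eval y)^2 := by
    intro y hy
    simp only [hG]
    have : 1 - y^2 = 0 := by linarith
    rw [this, zero_mul, add_zero]
  -- bound on [0,1]
  have hmono : MonotoneOn G (Set.Icc (0:ℝ) 1) := by
    apply monotoneOn_of_deriv_nonneg (convex_Icc 0 1) hcont.continuousOn
    · intro y hy
      exact ((hDeriv y).differentiableAt).differentiableWithinAt
    · intro y hy
      rw [(hDeriv y).deriv]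
      rw [interior_Icc] at hy
      have : 0 ≤ y := le_of_lt hy.1
      positivity
  have hanti : AntitoneOn G (Set.Icc (-1:ℝ) 0) := by
    apply antitoneOn_of_deriv_nonpos (convex_Icc (-1) 0) hcont.continuousOn
    · intro y hy
      exact ((hDeriv y).differentiableAt).differentiableWithinAt
    · intro y hy
      rw [(hDeriv y).deriv]
      rw [interior_Icc] at hy
      have hy0 : y ≤ 0 := le_of_lt hy.2
      nlinarith [sq_nonneg ((Q n (n+2)).eval y)]
  have hval1 : G 1 = (lam - 2) * (((n:ℝ)*(n+1)/2) * (2 ^ n * n.factorial))^2 := by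
    rw [hGval 1 (by norm_num), evalQ1_one]
  have hvalneg1 : G (-1) = (lam - 2) * (((n:ℝ)*(n+1)/2) * (2 ^ n * n.factorial))^2 := by
    rw [hGval (-1) (by norm_num), evalQ1_negone, neg_pow]
    have key : ((-1:ℝ) ^ n) ^ 2 = 1 := by
      rw [← pow_mul, mul_comm, pow_mul]; norm_num
    linear_combination ((lam - 2) * ((n:ℝ)*(n+1)/2)^2 * ((2:ℝ)^n * (n.factorial:ℝ))^2) * key
  have hGbound : G x ≤ (lam - 2) * (((n:ℝ)*(n+1)/2) * (2 ^ n * n.factorial))^2 := by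
    rcases le_or_gt 0 x with h0 | h0
    · have := hmono (Set.mem_Icc.mpr ⟨h0, hx.2⟩) (Set.mem_Icc.mpr ⟨zero_le_one, le_refl 1⟩) hx.2
      rw [hval1] at this; exact this
    · have := hanti (Set.mem_Icc.mpr ⟨le_refl (-1:ℝ), by norm_num⟩)
        (Set.mem_Icc.mpr ⟨hx.1, le_of_lt h0⟩) hx.1
      rw [hvalneg1] at this; exact this
  have hpos : 0 ≤ (1 - x^2) * ((Q n (n+2)).eval x)^2 := by
    have hx1 : x^2 ≤ 1 := by nlinarith [hx.1, hx.2]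
    nlinarith [sq_nonneg ((Q n (n+2)).eval x)]
  have : (lam - 2) * ((Q n (n+1)).eval x)^2 ≤ (lam - 2) * (((n:ℝ)*(n+1)/2) * (2 ^ n * n.factorial))^2 := by
    have : (lam - 2) * ((Q n (n+1)).eval x)^2 ≤ G x := by
      simp only [hG]; linarith
    linarith
  have h2 : 0 < lam - 2 := by linarith
  exact le_of_mul_le_mul_left this h2

lemma intInt (n k : ℕ) (a b : ℝ) :
    IntervalIntegrable (fun x : ℝ => (Q n k).eval x) MeasureTheory.volume a b :=
  (contQ n k).intervalIntegrable a b

lemma Q_zero_of_big (n k : ℕ) (hk : 2 * n < k) : Q n k = 0 := by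
  apply iterate_derivative_eq_zero
  have h1 : (((X:Polynomial ℝ)^2 - 1)^n).natDegree ≤ n * (((X:Polynomial ℝ)^2 - 1)).natDegree :=
    natDegree_pow_le
  have h2 : (((X:Polynomial ℝ)^2 - 1)).natDegree ≤ 2 := by
    apply le_trans (natDegree_sub_le _ _)
    simp [natDegree_X_pow]
  have h3 : n * (((X:Polynomial ℝ)^2 - 1)).natDegree ≤ n * 2 := Nat.mul_le_mul_left n h2
  omega

lemma orth_step (n k : ℕ) (hk : k + 1 ≤ n) :
    ∫ x in (-1:ℝ)..1, (Q n (n+2+k)).eval x * (Q n (n-k)).eval x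
      = - ∫ x in (-1:ℝ)..1, (Q n (n+2+(k+1))).eval x * (Q n (n-(k+1))).eval x := by
  have hsub : n - k = (n - (k+1)) + 1 := by omega
  have h := integral_mul_deriv_eq_deriv_mul
    (u := fun x : ℝ => (Q n (n+2+k)).eval x) (u' := fun x : ℝ => (Q n (n+2+k+1)).eval x)
    (v := fun x : ℝ => (Q n (n-(k+1))).eval x) (v' := fun x : ℝ => (Q n (n-k)).eval x)
    (a := (-1:ℝ)) (b := 1)
    (fun x _ => hasDerivAtQ n (n+2+k) x)
    (fun x _ => by rw [hsub]; exact hasDerivAtQ n (n-(k+1)) x)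
    (intInt n (n+2+k+1) (-1) 1) (by rw [hsub]; exact intInt n (n-(k+1)+1) (-1) 1)
  rw [h]
  beta_reduce
  rw [eval_vanish n (n-(k+1)) (by omega) 1 (by norm_num),
    eval_vanish n (n-(k+1)) (by omega) (-1) (by norm_num)]
  have e : n+2+k+1 = n+2+(k+1) := by omega
  rw [e]
  ring

lemma orth (n : ℕ) :
    ∫ x in (-1:ℝ)..1, (Q n (n+2)).eval x * (Q n n).eval x = 0 := by
  have key : ∀ k, k ≤ n →
      ∃ c : ℝ, (c = 1 ∨ c = -1) ∧
      ∫ x in (-1:ℝ)..1, (Q n (n+2)).eval x * (Q n n).eval x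
        = c * ∫ x in (-1:ℝ)..1, (Q n (n+2+k)).eval x * (Q n (n-k)).eval x := by
    intro k
    induction k with
    | zero => intro _; exact ⟨1, Or.inl rfl, by norm_num⟩
    | succ k ih =>
      intro hk
      obtain ⟨c, hc, hval⟩ := ih (by omega)
      refine ⟨-c, by rcases hc with h | h <;> rw [h] <;> norm_num, ?_⟩
      rw [hval, orth_step n k hk]
      ring
  obtain ⟨c, hc, hval⟩ := key n (le_refl n)
  rw [hval, Q_zero_of_big n (n+2+n) (by omega)]
  simp

lemma integral_sq (n : ℕ) :
    ∫ x in (-1:ℝ)..1, ((Q n (n+1)).eval x)^2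
      = ((n:ℝ) * (n+1)) * ((2:ℝ)^n * n.factorial)^2 := by
  have h := integral_mul_deriv_eq_deriv_mul
    (u := fun x : ℝ => (Q n (n+1)).eval x) (u' := fun x : ℝ => (Q n (n+2)).eval x)
    (v := fun x : ℝ => (Q n n).eval x) (v' := fun x : ℝ => (Q n (n+1)).eval x)
    (a := (-1:ℝ)) (b := 1)
    (fun x _ => hasDerivAtQ n (n+1) x)
    (fun x _ => hasDerivAtQ n n x)
    (intInt n (n+2) (-1) 1) (intInt n (n+1) (-1) 1)
  have hsq : (fun x : ℝ => ((Q n (n+1)).eval x)^2)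
      = fun x : ℝ => (Q n (n+1)).eval x * (Q n (n+1)).eval x := by
    funext x; ring
  rw [hsq, h, orth n]
  beta_reduce
  rw [evalQ_one, evalQ_negone, evalQ1_one, evalQ1_negone]
  have key : ((-2:ℝ) ^ (n*2)) = ((2:ℝ) ^ (n*2)) := by
    rw [mul_comm, pow_mul, pow_mul]
    norm_num
  linear_combination ((((n:ℝ) + (n:ℝ)^2) / 2) * (n.factorial:ℝ)^2) * key

end LegAux

open LegAux Polynomial

theorem legendre_deriv_fourth_small (C : ℝ) (hC : 0 < C) :
    ∃ K > 0, ∃ ℓ₀ : ℕ, ∀ ℓ : ℕ, ℓ₀ ≤ ℓ →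
      |∫ θ in (C / (ℓ : ℝ))..(π / 2),
          (16 / ((ℓ : ℝ) ^ 4 * ((ℓ : ℝ) + 1) ^ 4)) *
            (deriv (legendreP ℓ) (Real.cos θ)) ^ 4 * Real.sin θ| ≤ K / (ℓ : ℝ) ^ 2 := by
  refine ⟨4, by norm_num, max 2 ⌈C⌉₊, fun ℓ hℓ => ?_⟩
  have hℓ2 : 2 ≤ ℓ := le_trans (le_max_left _ _) hℓ
  have hℓC : C ≤ (ℓ : ℝ) := by
    calc C ≤ (⌈C⌉₊ : ℝ) := Nat.le_ceil C
    _ ≤ (ℓ : ℝ) := by exact_mod_cast le_trans (le_max_right _ _) hℓ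
  have hℓpos : (0:ℝ) < ℓ := by positivity
  set n := ℓ
  set N : ℝ := (2:ℝ) ^ n * n.factorial with hN
  have hNpos : 0 < N := by positivity
  set lam : ℝ := (n:ℝ) * ((n:ℝ)+1) with hlam
  have hlampos : 0 < lam := by positivity
  set Df : ℝ → ℝ := fun t => (1 / N) * (Q n (n+1)).eval t with hDf
  have hDeq : deriv (legendreP n) = Df := deriv_legendreP n
  have hDcont : Continuous Df := by
    exact continuous_const.mul (Q n (n+1)).continuous
  -- the key sup bound for Df
  have hDbound : ∀ x ∈ Set.Icc (-1:ℝ) 1, (Df x)^2 ≤ (lam/2)^2 := by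
    intro x hx
    have h := sup_bound n hℓ2 hx
    have : (Df x)^2 = ((Q n (n+1)).eval x)^2 / N^2 := by
      rw [hDf]; field_simp
    rw [this]
    rw [div_le_iff₀ (by positivity)]
    calc ((Q n (n+1)).eval x)^2 ≤ ((n:ℝ)*(n+1)/2 * N)^2 := h
      _ = (lam/2)^2 * N^2 := by rw [hlam]; ring
  -- the L² integral
  have hDint : ∫ x in (-1:ℝ)..1, (Df x)^2 = lam := by
    have : (fun x : ℝ => (Df x)^2) = fun x => (1/N^2) * ((Q n (n+1)).eval x)^2 := by
      funext x; rw [hDf]; ring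
    rw [this, intervalIntegral.integral_const_mul, integral_sq n, ← hN, ← hlam]
    field_simp
  set a : ℝ := C / ℓ with ha
  set b : ℝ := π / 2 with hb
  have hapos : 0 < a := by positivity
  have ha1 : a ≤ 1 := by rw [ha, div_le_one hℓpos]; exact hℓC
  have hab : a ≤ b := le_trans ha1 (by rw [hb]; linarith [pi_gt_three])
  have hbπ : b ≤ π := by rw [hb]; linarith [pi_pos]
  -- nonnegativity of sin on [a,b]
  have hsin : ∀ θ ∈ Set.Icc a b, 0 ≤ sin θ := fun θ hθ =>
    sin_nonneg_of_nonneg_of_le_pi (le_trans hapos.le hθ.1) (le_trans hθ.2 hbπ)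
  -- integrand and its majorant
  set F : ℝ → ℝ := fun θ => (16 / ((ℓ : ℝ) ^ 4 * ((ℓ : ℝ) + 1) ^ 4)) *
      (Df (Real.cos θ)) ^ 4 * Real.sin θ with hF
  set c2 : ℝ := 4 / ((ℓ:ℝ)^2 * ((ℓ:ℝ)+1)^2) with hc2
  set G : ℝ → ℝ := fun θ => c2 * ((Df (Real.cos θ)) ^ 2 * Real.sin θ) with hG
  have hFcont : Continuous F := by fun_prop
  have hGcont : Continuous G := by fun_prop
  have hFle : ∀ θ ∈ Set.Icc a b, F θ ≤ G θ := by
    intro θ hθ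
    have hcos : Real.cos θ ∈ Set.Icc (-1:ℝ) 1 := ⟨neg_one_le_cos θ, cos_le_one θ⟩
    have h1 : (Df (Real.cos θ))^4 ≤ (lam/2)^2 * (Df (Real.cos θ))^2 := by
      have := hDbound _ hcos
      nlinarith [sq_nonneg (Df (Real.cos θ)), this]
    have hs := hsin θ hθ
    rw [hF, hG, hc2]
    have hcoef : (16 / ((ℓ : ℝ) ^ 4 * ((ℓ : ℝ) + 1) ^ 4)) * (lam/2)^2
        = 4 / ((ℓ:ℝ)^2 * ((ℓ:ℝ)+1)^2) := by
      have hnℓ : ((ℓ:ℕ):ℝ) = (n:ℝ) := rfl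
      rw [hlam, hnℓ]
      field_simp
      ring
    calc (16 / ((ℓ : ℝ) ^ 4 * ((ℓ : ℝ) + 1) ^ 4)) * (Df (Real.cos θ)) ^ 4 * Real.sin θ
        ≤ (16 / ((ℓ : ℝ) ^ 4 * ((ℓ : ℝ) + 1) ^ 4)) * ((lam/2)^2 * (Df (Real.cos θ)) ^ 2) * Real.sin θ := by
          apply mul_le_mul_of_nonneg_right _ hs
          apply mul_le_mul_of_nonneg_left h1 (by positivity)
      _ = ((16 / ((ℓ : ℝ) ^ 4 * ((ℓ : ℝ) + 1) ^ 4)) * (lam/2)^2) * ((Df (Real.cos θ)) ^ 2 * Real.sin θ) := by ring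
      _ = 4 / ((ℓ:ℝ)^2 * ((ℓ:ℝ)+1)^2) * ((Df (Real.cos θ)) ^ 2 * Real.sin θ) := by rw [hcoef]
  have hFnonneg : ∀ θ ∈ Set.Icc a b, 0 ≤ F θ := by
    intro θ hθ
    have hs := hsin θ hθ
    rw [hF]
    have : (0:ℝ) ≤ (16 / ((ℓ : ℝ) ^ 4 * ((ℓ : ℝ) + 1) ^ 4)) := by positivity
    positivity
  -- substitution for the quadratic integral
  have hsub : ∫ θ in a..b, (Df (Real.cos θ)) ^ 2 * Real.sin θ
      = ∫ x in (0:ℝ)..(Real.cos a), (Df x)^2 := by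
    have h := intervalIntegral.integral_comp_smul_deriv
      (f := Real.cos) (f' := fun θ => -Real.sin θ) (g := fun x => (Df x)^2)
      (a := a) (b := b)
      (fun θ _ => Real.hasDerivAt_cos θ)
      (continuous_sin.neg.continuousOn)
      (by fun_prop)
    have hcb : Real.cos b = 0 := by rw [hb]; exact Real.cos_pi_div_two
    rw [hcb] at h
    have h3 : ∫ θ in a..b, (Df (Real.cos θ)) ^ 2 * Real.sin θ
        = - ∫ x in (Real.cos a)..(0:ℝ), (Df x)^2 := by
      rw [← h, ← intervalIntegral.integral_neg]
      congr 1
      funext θ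
      simp only [Function.comp, smul_eq_mul]
      ring
    rw [h3, ← intervalIntegral.integral_symm]
  -- monotone comparison of x-integrals
  have hxmono : ∫ x in (0:ℝ)..(Real.cos a), (Df x)^2 ≤ lam := by
    have hca0 : 0 ≤ Real.cos a := Real.cos_nonneg_of_mem_Icc ⟨by linarith [hapos], by
      rw [hb] at hab; exact hab⟩
    have hca1 : Real.cos a ≤ 1 := Real.cos_le_one a
    have hint : ∀ u v : ℝ, IntervalIntegrable (fun x => (Df x)^2) MeasureTheory.volume u v := by
      intro u v; exact ((hDcont.pow 2)).intervalIntegrable u v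
    have h1 : (∫ x in (-1:ℝ)..0, (Df x)^2) + (∫ x in (0:ℝ)..(Real.cos a), (Df x)^2)
        + (∫ x in (Real.cos a)..1, (Df x)^2) = ∫ x in (-1:ℝ)..1, (Df x)^2 := by
      rw [intervalIntegral.integral_add_adjacent_intervals (hint (-1) 0) (hint 0 (Real.cos a))]
      exact intervalIntegral.integral_add_adjacent_intervals (hint (-1) (Real.cos a)) (hint _ 1)
    have hp1 : 0 ≤ ∫ x in (-1:ℝ)..0, (Df x)^2 :=
      intervalIntegral.integral_nonneg (by norm_num) (fun x _ => sq_nonneg _)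
    have hp3 : 0 ≤ ∫ x in (Real.cos a)..1, (Df x)^2 :=
      intervalIntegral.integral_nonneg hca1 (fun x _ => sq_nonneg _)
    rw [hDint] at h1
    linarith
  -- put everything together
  have hIle : ∫ θ in a..b, F θ ≤ c2 * lam := by
    have hmono := intervalIntegral.integral_mono_on hab
      (hFcont.intervalIntegrable a b : IntervalIntegrable F MeasureTheory.volume a b)
      (hGcont.intervalIntegrable a b : IntervalIntegrable G MeasureTheory.volume a b) hFle
    have : ∫ θ in a..b, G θ = c2 * ∫ θ in a..b, (Df (Real.cos θ)) ^ 2 * Real.sin θ := by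
      rw [hG, intervalIntegral.integral_const_mul]
    rw [this, hsub] at hmono
    calc ∫ θ in a..b, F θ ≤ c2 * ∫ x in (0:ℝ)..(Real.cos a), (Df x)^2 := hmono
      _ ≤ c2 * lam := by
          apply mul_le_mul_of_nonneg_left hxmono (by positivity)
  have hInonneg : 0 ≤ ∫ θ in a..b, F θ :=
    intervalIntegral.integral_nonneg hab hFnonneg
  have hIeq : (∫ θ in (C / (ℓ : ℝ))..(π / 2),
      (16 / ((ℓ : ℝ) ^ 4 * ((ℓ : ℝ) + 1) ^ 4)) *
        (deriv (legendreP ℓ) (Real.cos θ)) ^ 4 * Real.sin θ) = ∫ θ in a..b, F θ := by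
    rw [hDeq]
  rw [hIeq, abs_of_nonneg hInonneg]
  calc ∫ θ in a..b, F θ ≤ c2 * lam := hIle
    _ = 4 / ((ℓ:ℝ) * ((ℓ:ℝ)+1)) := by
        have hnℓ : ((ℓ:ℕ):ℝ) = (n:ℝ) := rfl
        rw [hc2, hlam, hnℓ]
        field_simp
    _ ≤ 4 / (ℓ:ℝ)^2 := by
        apply div_le_div_of_nonneg_left (by norm_num) (by positivity)
        nlinarith [hℓpos]
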